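/- Let X be a cyclic Banach C(K)-module with K hyperstonian and m : C(K) → L(X) an isometric unital algebra homomorphism that is continuous from the weak-star topology of C(K) = (C(K)_*)' to the weak operator topology of L(X). Then the Boolean algebra of idempotents of C(K) is Bade complete on X: for any increasing net of idempotents {e_α} with supremum e, ‖m(e)x − m(e_α)x‖ → 0 for all x ∈ X. -/

import Mathlib

open Filter Topology

/-- The Boolean algebra of idempotents of `C(K)` is Bade complete on `X`. -/
def BadeComplete {K X : Type*} [TopologicalSpace K] [CompactSpace K] [T2Space K]
    [NormedAddCommGroup X] [NormedSpace ℝ X] [CompleteSpace X]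
    (m : C(K, ℝ) →ₐ[ℝ] (X →L[ℝ] X)) : Prop :=
  ∀ S : Set C(K, ℝ), (∀ e ∈ S, e * e = e) → S.Nonempty → DirectedOn (· ≤ ·) S →
    ∀ E : C(K, ℝ), E * E = E → IsLUB S E →
      ∀ x : X, Filter.Tendsto (fun e : S => m (e : C(K, ℝ)) x) Filter.atTop (nhds (m E x))

/-- A bounded functional on `C(K)` is order continuous if it is continuous along
suprema of upward-directed sets. -/
def OrderContinuousFunc {K : Type*} [TopologicalSpace K] [CompactSpace K] [T2Space K]
    (φ : C(K, ℝ) →L[ℝ] ℝ) : Prop :=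
  ∀ S : Set C(K, ℝ), S.Nonempty → DirectedOn (· ≤ ·) S → ∀ b : C(K, ℝ), IsLUB S b →
    Filter.Tendsto (fun a : S => φ (a : C(K, ℝ))) Filter.atTop (nhds (φ b))

/-- `K` is hyperstonian: it is extremally disconnected (assumed separately) and the order
continuous functionals on `C(K)` separate points. -/
def SeparatesByNormalFunctionals (K : Type*) [TopologicalSpace K] [CompactSpace K]
    [T2Space K] : Prop :=
  ∀ a : C(K, ℝ), a ≠ 0 → ∃ φ : C(K, ℝ) →L[ℝ] ℝ, OrderContinuousFunc φ ∧ φ a ≠ 0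

/-- `m` is continuous from the weak-star topology of `C(K)` (tested against the order
continuous functionals, which form the predual when `K` is hyperstonian) to the weak
operator topology of `L(X)`, stated via nets. -/
def WStarWOTContinuous {K X : Type*} [TopologicalSpace K] [CompactSpace K] [T2Space K]
    [NormedAddCommGroup X] [NormedSpace ℝ X] [CompleteSpace X]
    (m : C(K, ℝ) →ₐ[ℝ] (X →L[ℝ] X)) : Prop :=
  ∀ (ι : Type) (_ : Preorder ι) (f : ι → C(K, ℝ)) (a : C(K, ℝ)),
    (∀ φ : C(K, ℝ) →L[ℝ] ℝ, OrderContinuousFunc φ →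
      Filter.Tendsto (fun i => φ (f i)) Filter.atTop (nhds (φ a))) →
    ∀ (x : X) (x' : X →L[ℝ] ℝ),
      Filter.Tendsto (fun i => x' (m (f i) x)) Filter.atTop (nhds (x' (m a x)))

-- Auxiliary development
namespace Stmt13Aux

variable {K : Type*} [TopologicalSpace K] [CompactSpace K] [T2Space K]

lemma idem_apply (e : C(K,ℝ)) (he : e * e = e) (k : K) : e k = 0 ∨ e k = 1 := by
  have := ContinuousMap.congr_fun he k
  rw [ContinuousMap.mul_apply] at this
  have h2 : e k * (e k - 1) = 0 := by rw [mul_sub, mul_one, this, sub_self]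
  rcases mul_eq_zero.1 h2 with h | h
  · left; exact h
  · right; linarith

lemma idem_nonneg (e : C(K,ℝ)) (he : e * e = e) : (0:C(K,ℝ)) ≤ e := by
  rw [ContinuousMap.le_def]
  intro k
  rcases idem_apply e he k with h | h <;> simp [h]

lemma idem_norm_le_one (e : C(K,ℝ)) (he : e * e = e) : ‖e‖ ≤ 1 := by
  rw [ContinuousMap.norm_le _ zero_le_one]
  intro k
  rcases idem_apply e he k with h | h <;> simp [h]

lemma idem_mul_of_le (e f : C(K,ℝ)) (he : e * e = e) (hf : f * f = f) (hef : e ≤ f) :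
    e * f = e := by
  ext k
  rw [ContinuousMap.mul_apply]
  rcases idem_apply e he k with h | h
  · simp [h]
  · rcases idem_apply f hf k with h' | h'
    · exfalso; have := ContinuousMap.le_def.1 hef k; rw [h, h'] at this; linarith
    · simp [h, h']

lemma idem_sub (e f : C(K,ℝ)) (he : e * e = e) (hf : f * f = f) (hef : e ≤ f) :
    (f - e) * (f - e) = f - e := by
  have h1 : e * f = e := idem_mul_of_le e f he hf hef
  have h2 : f * e = e := by rw [mul_comm]; exact h1
  calc (f - e) * (f - e) = f * f - f * e - (e * f - e * e) := by ring
  _ = f - e := by rw [h1, h2, he, hf]; ring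

lemma sub_le_of_idem (e f : C(K,ℝ)) (he : e * e = e) (hf : f * f = f) (hef : e ≤ f) :
    f - e ≤ f := by
  rw [ContinuousMap.le_def]
  intro k
  have := (ContinuousMap.le_def.1 (idem_nonneg e he)) k
  simp only [ContinuousMap.sub_apply]
  simpa using this

end Stmt13Aux

namespace Stmt13Aux2

variable {K : Type*} [TopologicalSpace K] [CompactSpace K] [T2Space K]

-- join of idempotents
noncomputable def jn (e f : C(K,ℝ)) : C(K,ℝ) := e + f - e * f

lemma jn_idem (e f : C(K,ℝ)) (he : e * e = e) (hf : f * f = f) :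
    jn e f * jn e f = jn e f := by
  unfold jn
  calc (e + f - e*f) * (e + f - e*f)
      = e*e + f*f + (e*e)*(f*f) + 2*(e*f) - 2*((e*e)*f) - 2*(e*(f*f)) := by ring
  _ = e + f - e*f := by rw [he, hf]; ring

lemma le_jn_left (e f : C(K,ℝ)) (he : e * e = e) (hf : f * f = f) : e ≤ jn e f := by
  rw [ContinuousMap.le_def]; intro k
  simp only [jn, ContinuousMap.sub_apply, ContinuousMap.add_apply, ContinuousMap.mul_apply]
  rcases Stmt13Aux.idem_apply e he k with h | h <;>
    rcases Stmt13Aux.idem_apply f hf k with h' | h' <;> simp [h, h']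

lemma le_jn_right (e f : C(K,ℝ)) (he : e * e = e) (hf : f * f = f) : f ≤ jn e f := by
  rw [ContinuousMap.le_def]; intro k
  simp only [jn, ContinuousMap.sub_apply, ContinuousMap.add_apply, ContinuousMap.mul_apply]
  rcases Stmt13Aux.idem_apply e he k with h | h <;>
    rcases Stmt13Aux.idem_apply f hf k with h' | h' <;> simp [h, h']

lemma jn_le (e f g : C(K,ℝ)) (he : e * e = e) (hf : f * f = f) (hg : g * g = g)
    (heg : e ≤ g) (hfg : f ≤ g) : jn e f ≤ g := by
  rw [ContinuousMap.le_def]; intro k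
  have h1 := ContinuousMap.le_def.1 heg k
  have h2 := ContinuousMap.le_def.1 hfg k
  simp only [jn, ContinuousMap.sub_apply, ContinuousMap.add_apply, ContinuousMap.mul_apply]
  rcases Stmt13Aux.idem_apply e he k with h | h <;>
    rcases Stmt13Aux.idem_apply f hf k with h' | h' <;>
      rcases Stmt13Aux.idem_apply g hg k with h'' | h'' <;>
        simp [h, h', h''] at * <;> linarith

-- existence of lub of a countable family of idempotents
lemma exists_sup [ExtremallyDisconnected K] (t : ℕ → C(K,ℝ)) (ht : ∀ n, t n * t n = t n) :
    ∃ b : C(K,ℝ), b * b = b ∧ IsLUB (Set.range t) b := by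
  classical
  set V : ℕ → Set K := fun n => (t n) ⁻¹' (Set.Ioi (1/2 : ℝ)) with hV
  have hVopen : ∀ n, IsOpen (V n) := fun n => (isOpen_Ioi).preimage (t n).continuous
  set W : Set K := closure (⋃ n, V n) with hW
  have hWopen : IsOpen W := ExtremallyDisconnected.open_closure _ (isOpen_iUnion hVopen)
  have hWclopen : IsClopen W := ⟨isClosed_closure, hWopen⟩
  have hcont : Continuous (fun k => if k ∈ W then (1:ℝ) else 0) := by
    apply continuous_if
    · intro a ha
      simp only [Set.setOf_mem_eq] at ha
      rw [hWclopen.frontier_eq] at ha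
      exact absurd ha (Set.notMem_empty a)
    · exact continuous_const.continuousOn
    · exact continuous_const.continuousOn
  refine ⟨⟨fun k => if k ∈ W then (1:ℝ) else 0, hcont⟩, ?_, ?_, ?_⟩
  · ext k
    rw [ContinuousMap.mul_apply]
    by_cases h : k ∈ W <;> simp [h]
  · -- upper bound
    rintro _ ⟨n, rfl⟩
    rw [ContinuousMap.le_def]; intro k
    rcases Stmt13Aux.idem_apply (t n) (ht n) k with h | h
    · rw [h]; dsimp only [ContinuousMap.coe_mk]; by_cases hk : k ∈ W <;> simp [hk]
    · have hk : k ∈ W := subset_closure (Set.mem_iUnion.2 ⟨n, by simp [V, h]; norm_num⟩)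
      rw [h]; simp [hk]
  · -- least
    intro c hc
    rw [ContinuousMap.le_def]; intro k
    dsimp only [ContinuousMap.coe_mk]
    by_cases hk : k ∈ W
    · simp only [hk, if_true]
      have hsub : (⋃ n, V n) ⊆ {x | 1 ≤ c x} := by
        rintro x ⟨s, ⟨n, rfl⟩, hx⟩
        have hcx := ContinuousMap.le_def.1 (hc (Set.mem_range_self n)) x
        rcases Stmt13Aux.idem_apply (t n) (ht n) x with h | h
        · exfalso; have : (1/2:ℝ) < t n x := hx; rw [h] at this; linarith
        · rw [h] at hcx; exact hcx
      have hclosed : IsClosed {x | 1 ≤ c x} := isClosed_le continuous_const c.continuous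
      exact (hclosed.closure_subset_iff.2 hsub) hk
    · simp only [hk, if_false]
      have hcx := ContinuousMap.le_def.1 (hc (Set.mem_range_self 0)) k
      rcases Stmt13Aux.idem_apply (t 0) (ht 0) k with h | h
      · rw [h] at hcx; exact hcx
      · have hk' : k ∈ W := subset_closure (Set.mem_iUnion.2 ⟨0, by
          simp only [hV, Set.mem_preimage, Set.mem_Ioi, h]; norm_num⟩)
        exact absurd hk' hk

end Stmt13Aux2

section CL
open Filter Topology Stmt13Aux Stmt13Aux2

variable {K X : Type*} [TopologicalSpace K] [CompactSpace K] [T2Space K]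
  [NormedAddCommGroup X] [NormedSpace ℝ X] [CompleteSpace X]

lemma tendsto_phi_chain (t : ℕ → C(K,ℝ)) (hmono : Monotone t) (b : C(K,ℝ))
    (hlub : IsLUB (Set.range t) b) (φ : C(K, ℝ) →L[ℝ] ℝ) (hφ : OrderContinuousFunc φ) :
    Tendsto (fun n => φ (t n)) atTop (𝓝 (φ b)) := by
  have hne : (Set.range t).Nonempty := ⟨t 0, Set.mem_range_self 0⟩
  have hdir : DirectedOn (· ≤ ·) (Set.range t) := by
    rintro _ ⟨i, rfl⟩ _ ⟨j, rfl⟩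
    exact ⟨t (max i j), Set.mem_range_self _, hmono (le_max_left i j), hmono (le_max_right i j)⟩
  have h1 := hφ _ hne hdir b hlub
  have h2 : Tendsto (fun n : ℕ => (⟨t n, Set.mem_range_self n⟩ : Set.range t)) atTop atTop := by
    rw [tendsto_atTop_atTop]
    rintro ⟨_, i, rfl⟩
    exact ⟨i, fun a ha => by exact hmono ha⟩
  exact h1.comp h2

lemma chain_tendsto (m : C(K, ℝ) →ₐ[ℝ] (X →L[ℝ] X)) (hm : ∀ a : C(K, ℝ), ‖m a‖ = ‖a‖)
    (hcont : WStarWOTContinuous m)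
    (t : ℕ → C(K,ℝ)) (hidem : ∀ n, t n * t n = t n) (hmono : Monotone t)
    (b : C(K,ℝ)) (hb : b * b = b) (hlub : IsLUB (Set.range t) b) (x : X) :
    Tendsto (fun n => m (t n) x) atTop (𝓝 (m b x)) := by
  classical
  have htb : ∀ n, t n ≤ b := fun n => hlub.1 (Set.mem_range_self n)
  set r : ℕ → X := fun n => m b x - m (t n) x with hrdef
  have hweak : ∀ x' : X →L[ℝ] ℝ, Tendsto (fun n => x' (r n)) atTop (𝓝 0) := by
    intro x'
    have h := hcont ℕ inferInstance t b
      (fun φ hφ => tendsto_phi_chain t hmono b hlub φ hφ) x x'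
    have h2 : Tendsto (fun n => x' (m b x) - x' (m (t n) x)) atTop
        (𝓝 (x' (m b x) - x' (m b x))) := tendsto_const_nhds.sub h
    rw [sub_self] at h2
    refine h2.congr fun n => ?_
    simp [hrdef, map_sub]
  have key : ∀ n N : ℕ, n ≤ N → m (b - t N) (r n) = r N := by
    intro n N hnN
    have e1 : t n * b = t n := idem_mul_of_le _ _ (hidem n) hb (htb n)
    have e2 : t N * b = t N := idem_mul_of_le _ _ (hidem N) hb (htb N)
    have e3 : t n * t N = t n := idem_mul_of_le _ _ (hidem n) (hidem N) (hmono hnN)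
    have h1 : (b - t N) * (b - t n) = b - t N := by
      calc (b - t N) * (b - t n)
          = b * b - (t n * b) - (t N * b) + (t n * t N) := by ring
      _ = b - t N := by rw [hb, e1, e2, e3]; ring
    have : m (b - t N) (m (b - t n) x) = m ((b - t N) * (b - t n)) x := by
      rw [map_mul]; rfl
    have hr : ∀ k, r k = m (b - t k) x := fun k => by
      simp [hrdef, map_sub, ContinuousLinearMap.sub_apply]
    rw [hr n, hr N, this, h1]
  have hA : ∀ n, ‖m (b - t n)‖ ≤ 1 := fun n => by
    rw [hm]; exact idem_norm_le_one _ (idem_sub _ _ (hidem n) hb (htb n))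
  have hmem : (0:X) ∈ closure (convexHull ℝ (Set.range r)) := by
    by_contra h0
    obtain ⟨f, u, hfu, hub⟩ := geometric_hahn_banach_point_closed
      ((convex_convexHull ℝ _).closure) isClosed_closure h0
    have hn : ∀ n, u < f (r n) := fun n =>
      hub _ (subset_closure (subset_convexHull ℝ _ (Set.mem_range_self n)))
    have hu0 : u ≤ 0 := ge_of_tendsto' (hweak f) fun n => (hn n).le
    rw [map_zero] at hfu
    linarith
  rw [Metric.tendsto_atTop]
  intro ε hε
  obtain ⟨c, hc, hcd⟩ := Metric.mem_closure_iff.1 hmem ε hε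
  obtain ⟨ι, hfin, w, zf, hw0, hw1, hz, hsum⟩ := mem_convexHull_iff_exists_fintype.1 hc
  haveI := hfin
  choose nn hnn using fun i => (hz i)
  set N := Finset.univ.sup nn with hN
  have hAc : m (b - t N) c = r N := by
    rw [← hsum, map_sum]
    have hterm : ∀ i : ι, m (b - t N) (w i • zf i) = w i • r N := fun i => by
      rw [map_smul, ← hnn i, key (nn i) N (Finset.le_sup (Finset.mem_univ i))]
    rw [Finset.sum_congr rfl fun i _ => hterm i, ← Finset.sum_smul, hw1, one_smul]
  have hcnorm : ‖c‖ < ε := by rwa [dist_zero_left] at hcd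
  have hrN : ‖r N‖ < ε := by
    rw [← hAc]
    calc ‖m (b - t N) c‖ ≤ ‖m (b - t N)‖ * ‖c‖ := (m (b - t N)).le_opNorm c
    _ ≤ 1 * ‖c‖ := mul_le_mul_of_nonneg_right (hA N) (norm_nonneg c)
    _ = ‖c‖ := one_mul _
    _ < ε := hcnorm
  refine ⟨N, fun n hn => ?_⟩
  have h2 : m (b - t n) (r N) = r n := key N n hn
  rw [dist_eq_norm]
  have h3 : m (t n) x - m b x = -(r n) := by simp [hrdef]
  rw [h3, norm_neg, ← h2]
  calc ‖m (b - t n) (r N)‖ ≤ ‖m (b - t n)‖ * ‖r N‖ := (m (b - t n)).le_opNorm _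
  _ ≤ 1 * ‖r N‖ := mul_le_mul_of_nonneg_right (hA n) (norm_nonneg _)
  _ = ‖r N‖ := one_mul _
  _ < ε := hrN
end CL

section Main
open Filter Topology Stmt13Aux Stmt13Aux2

variable {K X : Type*} [TopologicalSpace K] [CompactSpace K] [T2Space K]
  [NormedAddCommGroup X] [NormedSpace ℝ X] [CompleteSpace X]

lemma op_zero_of_cyclic (m : C(K, ℝ) →ₐ[ℝ] (X →L[ℝ] X)) (hm : ∀ a : C(K, ℝ), ‖m a‖ = ‖a‖)
    (x₀ : X) (hcyc : DenseRange fun a : C(K, ℝ) => m a x₀)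
    (d : C(K,ℝ)) (hd : m d x₀ = 0) : d = 0 := by
  have hall : ∀ x : X, m d x = 0 := by
    intro x
    by_contra hpos
    have h0 : 0 < ‖m d x‖ := norm_pos_iff.2 hpos
    have hq : 0 < ‖m d x‖ / (‖d‖ + 1) := by positivity
    obtain ⟨a, ha⟩ := hcyc.exists_dist_lt x hq
    have hsplit : m d x = m d (x - m a x₀) + m d (m a x₀) := by
      rw [← map_add, sub_add_cancel]
    have hz : m d (m a x₀) = 0 := by
      have : m d (m a x₀) = m (d * a) x₀ := by rw [map_mul]; rfl
      rw [this, mul_comm]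
      have : m (a * d) x₀ = m a (m d x₀) := by rw [map_mul]; rfl
      rw [this, hd, map_zero]
    rw [hz, add_zero] at hsplit
    have hb : ‖m d x‖ ≤ ‖d‖ * ‖x - m a x₀‖ := by
      rw [hsplit, ← hm d]; exact (m d).le_opNorm _
    rw [← dist_eq_norm] at hb
    have : ‖d‖ * dist x (m a x₀) < ‖d‖ * (‖m d x‖ / (‖d‖ + 1)) + (‖m d x‖ / (‖d‖ + 1)) := by
      nlinarith [norm_nonneg d, dist_nonneg (x := x) (y := m a x₀)]
    have hlt : ‖d‖ * (‖m d x‖ / (‖d‖ + 1)) + ‖m d x‖ / (‖d‖ + 1) = ‖m d x‖ := by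
      field_simp
    nlinarith
  have hmd : m d = 0 := ContinuousLinearMap.ext fun x => by
    rw [hall x]; rfl
  have hnd : ‖d‖ = 0 := by rw [← hm d, hmd, norm_zero]
  exact norm_eq_zero.1 hnd

lemma tendsto_of_dense (m : C(K, ℝ) →ₐ[ℝ] (X →L[ℝ] X)) (hm : ∀ a : C(K, ℝ), ‖m a‖ = ‖a‖)
    (x₀ : X) (hcyc : DenseRange fun a : C(K, ℝ) => m a x₀)
    {ι' : Type*} [Preorder ι'] (w : ι' → C(K,ℝ)) (E : C(K,ℝ))
    (hidem : ∀ i, w i * w i = w i) (hE : E * E = E) (hle : ∀ i, w i ≤ E)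
    (h₀ : Tendsto (fun i => m (w i) x₀) atTop (𝓝 (m E x₀))) (x : X) :
    Tendsto (fun i => m (w i) x) atTop (𝓝 (m E x)) := by
  rw [Metric.tendsto_nhds]
  intro ε hε
  have hε3 : 0 < ε / 3 := by linarith
  obtain ⟨a, ha⟩ := hcyc.exists_dist_lt x hε3
  have hε' : 0 < ε / (3 * (‖a‖ + 1)) := by positivity
  filter_upwards [Metric.tendsto_nhds.1 h₀ _ hε'] with i hi
  have hwle : ‖E - w i‖ ≤ 1 := idem_norm_le_one _ (idem_sub _ _ (hidem i) hE (hle i))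
  have hsplit : m (w i) x - m E x = -(m (E - w i) (x - m a x₀)) - m a (m (E - w i) x₀) := by
    have h1 : m a (m (E - w i) x₀) = m (E - w i) (m a x₀) := by
      rw [← ContinuousLinearMap.mul_apply, ← ContinuousLinearMap.mul_apply,
        ← map_mul, ← map_mul, mul_comm]
    rw [h1, map_sub]
    simp only [ContinuousLinearMap.sub_apply, map_sub]
    abel
  rw [dist_eq_norm, hsplit]
  have hb1 : ‖m (E - w i) (x - m a x₀)‖ < ε / 3 := by
    calc ‖m (E - w i) (x - m a x₀)‖ ≤ ‖m (E - w i)‖ * ‖x - m a x₀‖ := (m _).le_opNorm _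
    _ ≤ 1 * ‖x - m a x₀‖ := by
        rw [hm]; exact mul_le_mul_of_nonneg_right hwle (norm_nonneg _)
    _ = dist x (m a x₀) := by rw [one_mul, dist_eq_norm]
    _ < ε / 3 := ha
  have hb2 : ‖m a (m (E - w i) x₀)‖ < ε / 3 := by
    have h2 : ‖m (E - w i) x₀‖ < ε / (3 * (‖a‖ + 1)) := by
      have : m (E - w i) x₀ = m E x₀ - m (w i) x₀ := by
        rw [map_sub]; simp [ContinuousLinearMap.sub_apply]
      rw [this, ← dist_eq_norm, dist_comm]
      exact hi
    calc ‖m a (m (E - w i) x₀)‖ ≤ ‖a‖ * ‖m (E - w i) x₀‖ := by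
          rw [← hm a]; exact (m a).le_opNorm _
    _ ≤ (‖a‖ + 1) * ‖m (E - w i) x₀‖ := by
        have := norm_nonneg (m (E - w i) x₀); nlinarith
    _ < (‖a‖ + 1) * (ε / (3 * (‖a‖ + 1))) := by
        apply mul_lt_mul_of_pos_left h2; positivity
    _ = ε / 3 := by field_simp
  calc ‖-(m (E - w i) (x - m a x₀)) - m a (m (E - w i) x₀)‖
      ≤ ‖-(m (E - w i) (x - m a x₀))‖ + ‖m a (m (E - w i) x₀)‖ := norm_sub_le _ _
  _ = ‖m (E - w i) (x - m a x₀)‖ + ‖m a (m (E - w i) x₀)‖ := by rw [norm_neg]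
  _ < ε / 3 + ε / 3 := by linarith
  _ < ε := by linarith

end Main

section MainProof
open Filter Topology Stmt13Aux Stmt13Aux2

theorem stmt13' {K X : Type*} [TopologicalSpace K] [CompactSpace K] [T2Space K]
    [ExtremallyDisconnected K]
    [NormedAddCommGroup X] [NormedSpace ℝ X] [CompleteSpace X]
    (m : C(K, ℝ) →ₐ[ℝ] (X →L[ℝ] X))
    (hm : ∀ a : C(K, ℝ), ‖m a‖ = ‖a‖)
    (x₀ : X) (hcyc : DenseRange fun a : C(K, ℝ) => m a x₀)
    (hcont : WStarWOTContinuous m) :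
    BadeComplete m := by
  classical
  intro S hSidem hSne hSdir E hE hlub x
  haveI hne : Nonempty ↥S := hSne.to_subtype
  haveI hdir : IsDirected ↥S (· ≤ ·) := ⟨fun a b => by
    obtain ⟨c, hc, h1, h2⟩ := hSdir a.1 a.2 b.1 b.2
    exact ⟨⟨c, hc⟩, h1, h2⟩⟩
  haveI hnb : (atTop : Filter ↥S).NeBot := atTop_neBot
  have hidemS : ∀ e : ↥S, (e : C(K,ℝ)) * e = e := fun e => hSidem e.1 e.2
  have hleE : ∀ e : ↥S, (e : C(K,ℝ)) ≤ E := fun e => hlub.1 e.2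
  suffices h₀ : Tendsto (fun e : ↥S => m e x₀) atTop (𝓝 (m E x₀)) by
    exact tendsto_of_dense m hm x₀ hcyc (fun e : ↥S => (e : C(K,ℝ))) E hidemS hE hleE h₀ x
  clear x
  set v : ↥S → X := fun e => m e x₀ with hv
  -- Part 1: the net is Cauchy
  have hCauchy : CauchySeq v := by
    refine Metric.cauchy_iff.2 ⟨Filter.map_neBot, ?_⟩
    intro ε hε
    suffices hcore : ∃ e₀ : ↥S, ∀ e f : ↥S, e₀ ≤ e → e₀ ≤ f → dist (v e) (v f) < ε by
      obtain ⟨e₀, hcore⟩ := hcore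
      refine ⟨v '' {e | e₀ ≤ e}, Filter.image_mem_map (mem_atTop_sets.2 ⟨e₀, fun b hb => hb⟩), ?_⟩
      rintro _ ⟨e, he, rfl⟩ _ ⟨f, hf, rfl⟩
      exact hcore e f he hf
    by_contra hno
    push_neg at hno
    have hstep : ∀ d : ↥S, ∃ pq : ↥S × ↥S,
        d ≤ pq.1 ∧ pq.1 ≤ pq.2 ∧ ε/2 ≤ dist (v pq.1) (v pq.2) := by
      intro d
      obtain ⟨e, f, hde, hdf, hd⟩ := hno d
      obtain ⟨g, hg, hge, hgf⟩ := hSdir e.1 e.2 f.1 f.2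
      have hge' : e ≤ (⟨g, hg⟩ : ↥S) := hge
      have hgf' : f ≤ (⟨g, hg⟩ : ↥S) := hgf
      have htri : ε ≤ dist (v e) (v ⟨g, hg⟩) + dist (v ⟨g, hg⟩) (v f) :=
        le_trans hd (dist_triangle _ _ _)
      rcases le_or_gt (ε/2) (dist (v e) (v ⟨g, hg⟩)) with h | h
      · exact ⟨(e, ⟨g, hg⟩), hde, hge', h⟩
      · refine ⟨(f, ⟨g, hg⟩), hdf, hgf', ?_⟩
        rw [dist_comm]; linarith
    choose F hF1 hF2 hF3 using hstep
    let G : ℕ → ↥S := fun n => Nat.rec (Classical.arbitrary ↥S) (fun _ prev => (F prev).2) n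
    have hG : ∀ n, G (n+1) = (F (G n)).2 := fun n => rfl
    let t : ℕ → C(K,ℝ) := fun n =>
      if n % 2 = 0 then ((F (G (n/2))).1 : C(K,ℝ)) else ((G (n/2 + 1) : ↥S) : C(K,ℝ))
    have ht2k : ∀ k, t (2*k) = ((F (G k)).1 : C(K,ℝ)) := by
      intro k
      show (if (2*k) % 2 = 0 then _ else _) = _
      rw [if_pos (by omega : (2*k) % 2 = 0)]
      have h2 : (2*k)/2 = k := by omega
      rw [h2]
    have ht2k1 : ∀ k, t (2*k+1) = ((G (k + 1) : ↥S) : C(K,ℝ)) := by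
      intro k
      show (if (2*k+1) % 2 = 0 then _ else _) = _
      rw [if_neg (by omega : ¬ (2*k+1) % 2 = 0)]
      have h2 : (2*k+1)/2 = k := by omega
      rw [h2]
    have htmem : ∀ n, t n ∈ S := by
      intro n
      show (if n % 2 = 0 then _ else _) ∈ S
      split_ifs
      · exact ((F (G (n/2))).1).2
      · exact (G (n/2 + 1)).2
    have htidem : ∀ n, t n * t n = t n := fun n => hSidem _ (htmem n)
    have htmono : Monotone t := by
      refine monotone_nat_of_le_succ fun n => ?_
      rcases Nat.mod_two_eq_zero_or_one n with h | h
      · have h1 : ¬ (n+1) % 2 = 0 := by omega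
        have h2 : (n+1)/2 = n/2 := by omega
        show (if n % 2 = 0 then _ else _) ≤ (if (n+1) % 2 = 0 then _ else _)
        rw [if_pos h, if_neg h1, h2]
        exact Subtype.coe_le_coe.2 (by rw [hG (n/2)] at *; exact hF2 (G (n/2)))
      · have h1 : ¬ n % 2 = 0 := by omega
        have h2 : (n+1) % 2 = 0 := by omega
        have h3 : (n+1)/2 = n/2 + 1 := by omega
        show (if n % 2 = 0 then _ else _) ≤ (if (n+1) % 2 = 0 then _ else _)
        rw [if_neg h1, if_pos h2, h3]
        exact Subtype.coe_le_coe.2 (hF1 (G (n/2 + 1)))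
    obtain ⟨b, hb, hblub⟩ := exists_sup t htidem
    have hconv := chain_tendsto m hm hcont t htidem htmono b hb hblub x₀
    have h2k : Tendsto (fun k => m (t (2*k)) x₀) atTop (𝓝 (m b x₀)) :=
      hconv.comp (tendsto_atTop_atTop.2 fun c => ⟨c, fun a ha => by omega⟩)
    have h2k1 : Tendsto (fun k => m (t (2*k+1)) x₀) atTop (𝓝 (m b x₀)) :=
      hconv.comp (tendsto_atTop_atTop.2 fun c => ⟨c, fun a ha => by omega⟩)
    have hdist : Tendsto (fun k => dist (m (t (2*k)) x₀) (m (t (2*k+1)) x₀)) atTop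
        (𝓝 (dist (m b x₀) (m b x₀))) := h2k.dist h2k1
    rw [dist_self] at hdist
    have hlow : ∀ k, ε/2 ≤ dist (m (t (2*k)) x₀) (m (t (2*k+1)) x₀) := by
      intro k
      rw [ht2k, ht2k1]
      have h3 := hF3 (G k)
      rw [hG k]
      exact h3
    have hfin : ε/2 ≤ 0 := ge_of_tendsto' hdist hlow
    linarith
  obtain ⟨y, hy⟩ := cauchySeq_tendsto_of_complete hCauchy
  -- Part 2: limit identification
  have hmey : ∀ e : ↥S, m e y = m e x₀ := by
    intro e
    have h1 : Tendsto (fun f : ↥S => m e (v f)) atTop (𝓝 (m e y)) :=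
      ((m e).continuous.tendsto y).comp hy
    have h2 : (fun f : ↥S => m (e : C(K,ℝ)) (v f)) =ᶠ[atTop] (fun _ => m (e : C(K,ℝ)) x₀) := by
      have hmem : {f : ↥S | e ≤ f} ∈ (atTop : Filter ↥S) := mem_atTop_sets.2 ⟨e, fun b hb => hb⟩
      refine Filter.eventually_iff.2 (Filter.mem_of_superset hmem ?_)
      intro f hf
      show m (e : C(K,ℝ)) (m (f : C(K,ℝ)) x₀) = m (e : C(K,ℝ)) x₀
      rw [← ContinuousLinearMap.mul_apply, ← map_mul,
        idem_mul_of_le _ _ (hidemS e) (hidemS f) hf]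
    exact tendsto_nhds_unique h1 (tendsto_const_nhds.congr' h2.symm)
  have hmEy : m E y = y := by
    have h1 : Tendsto (fun f : ↥S => m E (v f)) atTop (𝓝 (m E y)) :=
      ((m E).continuous.tendsto y).comp hy
    have h2 : (fun f : ↥S => m E (v f)) = v := by
      funext f
      show m E (m (f : C(K,ℝ)) x₀) = m (f : C(K,ℝ)) x₀
      rw [← ContinuousLinearMap.mul_apply, ← map_mul, mul_comm,
        idem_mul_of_le _ _ (hidemS f) hE (hleE f)]
    rw [h2] at h1
    exact tendsto_nhds_unique h1 hy
  set z : X := m E x₀ - y with hz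
  have hmEz : m E z = z := by
    rw [hz, (m E).map_sub, hmEy]
    congr 1
    rw [← ContinuousLinearMap.mul_apply, ← map_mul, hE]
  have hmez : ∀ e : ↥S, m (e : C(K,ℝ)) z = 0 := by
    intro e
    rw [hz, (m (e : C(K,ℝ))).map_sub, hmey e]
    have h3 : m (e : C(K,ℝ)) (m E x₀) = m (e : C(K,ℝ)) x₀ := by
      rw [← ContinuousLinearMap.mul_apply, ← map_mul,
        idem_mul_of_le _ _ (hidemS e) hE (hleE e)]
    rw [h3, sub_self]
  suffices hz0 : z = 0 by
    have heq : m E x₀ = y := by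
      have := hz ▸ hz0
      exact sub_eq_zero.1 this
    rw [heq]
    exact hy
  -- Part 3: Zorn exhaustion to show z = 0
  set 𝒩 : Set C(K,ℝ) := {g | g * g = g ∧ g ≤ E ∧ m g z = 0} with h𝒩
  have hS𝒩 : ∀ e : ↥S, (e : C(K,ℝ)) ∈ 𝒩 := fun e => ⟨hidemS e, hleE e, hmez e⟩
  have hjoin : ∀ g ∈ 𝒩, ∀ h ∈ 𝒩, jn g h ∈ 𝒩 := by
    rintro g ⟨hg1, hg2, hg3⟩ h ⟨hh1, hh2, hh3⟩
    refine ⟨jn_idem g h hg1 hh1, jn_le g h E hg1 hh1 hE hg2 hh2, ?_⟩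
    show m (g + h - g * h) z = 0
    have hop : m (g + h - g * h) = m g + m h - m g * m h := by
      rw [map_sub, map_add, map_mul]
    rw [hop]
    simp only [ContinuousLinearMap.sub_apply, ContinuousLinearMap.add_apply,
      ContinuousLinearMap.mul_apply]
    rw [hh3, (m g).map_zero, hg3]
    simp
  have hchain𝒩 : ∀ (t : ℕ → C(K,ℝ)), (∀ n, t n ∈ 𝒩) → Monotone t →
      ∀ b, b * b = b → IsLUB (Set.range t) b → b ∈ 𝒩 := by
    intro t htm htmono b hb hblub
    refine ⟨hb, hblub.2 ?_, ?_⟩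
    · rintro _ ⟨n, rfl⟩
      exact (htm n).2.1
    · have hconv := chain_tendsto m hm hcont t (fun n => (htm n).1) htmono b hb hblub z
      have hzero : ∀ n, m (t n) z = 0 := fun n => (htm n).2.2
      have h0 : Tendsto (fun n : ℕ => m (t n) z) atTop (𝓝 0) := by
        rw [show (fun n : ℕ => m (t n) z) = fun _ => (0:X) from funext hzero]
        exact tendsto_const_nhds
      exact tendsto_nhds_unique hconv h0
  set P : Set (Set C(K,ℝ)) :=
    {D | (∀ d ∈ D, d * d = d ∧ d ≠ 0 ∧ ∃ h ∈ 𝒩, d ≤ h) ∧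
      D.Pairwise (fun d d' => d * d' = 0)} with hP
  obtain ⟨D, hDP, hDmaxle⟩ := zorn_subset P (by
    intro c hcP hchain
    refine ⟨⋃₀ c, ⟨?_, ?_⟩, fun s hs => Set.subset_sUnion_of_mem hs⟩
    · rintro d ⟨s, hs, hd⟩
      exact (hcP hs).1 d hd
    · intro d hd d' hd' hne
      obtain ⟨s, hs, hdm⟩ := hd
      obtain ⟨s', hs', hdm'⟩ := hd'
      rcases hchain.total hs hs' with h | h
      · exact (hcP hs').2 (h hdm) hdm' hne
      · exact (hcP hs).2 hdm (h hdm') hne)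
  have hDne0 : ∀ d ∈ D, m d x₀ ≠ 0 := by
    intro d hd hzero
    exact (hDP.1 d hd).2.1 (op_zero_of_cyclic m hm x₀ hcyc d hzero)
  have hlevelfin : ∀ n : ℕ, Set.Finite {d ∈ D | 1/((n:ℝ)+1) ≤ ‖m d x₀‖} := by
    intro n
    by_contra hinf
    set Em := Set.Infinite.natEmbedding _ hinf with hEm
    set d : ℕ → C(K,ℝ) := fun k => ((Em k : ↥{d ∈ D | 1/((n:ℝ)+1) ≤ ‖m d x₀‖}) : C(K,ℝ)) with hd
    have hdD : ∀ k, d k ∈ D := fun k => (Em k).2.1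
    have hdnorm : ∀ k, 1/((n:ℝ)+1) ≤ ‖m (d k) x₀‖ := fun k => (Em k).2.2
    have hdinj : ∀ i j, i ≠ j → d i ≠ d j := by
      intro i j hij hEq
      exact hij (Em.injective (Subtype.coe_injective hEq))
    have hdzero : ∀ i j, i ≠ j → d i * d j = 0 :=
      fun i j hij => hDP.2 (hdD i) (hdD j) (hdinj i j hij)
    have hdidem : ∀ k, d k * d k = d k := fun k => (hDP.1 _ (hdD k)).1
    let s : ℕ → C(K,ℝ) := fun k => Nat.rec (d 0) (fun k prev => prev + d (k+1)) k
    have hssucc : ∀ k, s (k+1) = s k + d (k+1) := fun k => rfl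
    have hsd : ∀ k j, k < j → s k * d j = 0 := by
      intro k
      induction k with
      | zero => intro j hj; exact hdzero 0 j (by omega)
      | succ k ih =>
        intro j hj
        rw [hssucc, add_mul, ih j (by omega), hdzero (k+1) j (by omega), add_zero]
    have hsidem : ∀ k, s k * s k = s k := by
      intro k
      induction k with
      | zero => exact hdidem 0
      | succ k ih =>
        rw [hssucc]
        have h1 : s k * d (k+1) = 0 := hsd k (k+1) (by omega)
        have h2 : d (k+1) * s k = 0 := by rw [mul_comm]; exact h1
        calc (s k + d (k+1)) * (s k + d (k+1))
            = s k * s k + s k * d (k+1) + d (k+1) * s k + d (k+1) * d (k+1) := by ring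
        _ = s k + d (k+1) := by rw [ih, h1, h2, hdidem]; ring
    have hsmono : Monotone s := by
      refine monotone_nat_of_le_succ fun k => ?_
      rw [hssucc, ContinuousMap.le_def]
      intro p
      have := ContinuousMap.le_def.1 (idem_nonneg _ (hdidem (k+1))) p
      simp only [ContinuousMap.add_apply]
      simp only [ContinuousMap.zero_apply] at this
      linarith
    have hdles : ∀ k, d k ≤ s k := by
      intro k
      cases k with
      | zero => exact le_refl _
      | succ k =>
        rw [hssucc, ContinuousMap.le_def]
        intro p
        have := ContinuousMap.le_def.1 (idem_nonneg _ (hsidem k)) p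
        simp only [ContinuousMap.add_apply]
        simp only [ContinuousMap.zero_apply] at this
        linarith
    obtain ⟨b, hb, hblub⟩ := exists_sup s hsidem
    have hdleb : ∀ k, d k ≤ b := fun k => le_trans (hdles k) (hblub.1 (Set.mem_range_self k))
    have hconv := chain_tendsto m hm hcont s hsidem hsmono b hb hblub x₀
    have hpos : (0:ℝ) < 1/((n:ℝ)+1) := by positivity
    rw [Metric.tendsto_atTop] at hconv
    obtain ⟨k₀, hk₀⟩ := hconv _ hpos
    have hkd := hk₀ k₀ (le_refl _)
    have hkey : m (d (k₀+1)) x₀ = m (d (k₀+1)) (m b x₀ - m (s k₀) x₀) := by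
      rw [(m _).map_sub]
      have h1 : m (d (k₀+1)) (m b x₀) = m (d (k₀+1)) x₀ := by
        rw [← ContinuousLinearMap.mul_apply, ← map_mul,
          idem_mul_of_le _ _ (hdidem _) hb (hdleb _)]
      have h2 : m (d (k₀+1)) (m (s k₀) x₀) = 0 := by
        rw [← ContinuousLinearMap.mul_apply, ← map_mul]
        have h3 : d (k₀+1) * s k₀ = 0 := by
          rw [mul_comm]; exact hsd k₀ (k₀+1) (by omega)
        rw [h3, map_zero]
        rfl
      rw [h1, h2, sub_zero]
    have hnorm : ‖m (d (k₀+1)) x₀‖ < 1/((n:ℝ)+1) := by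
      rw [hkey]
      calc ‖m (d (k₀+1)) (m b x₀ - m (s k₀) x₀)‖
          ≤ ‖m (d (k₀+1))‖ * ‖m b x₀ - m (s k₀) x₀‖ := (m _).le_opNorm _
      _ ≤ 1 * ‖m b x₀ - m (s k₀) x₀‖ := by
          rw [hm]
          exact mul_le_mul_of_nonneg_right (idem_norm_le_one _ (hdidem _)) (norm_nonneg _)
      _ = ‖m b x₀ - m (s k₀) x₀‖ := one_mul _
      _ < 1/((n:ℝ)+1) := by rw [← dist_eq_norm, dist_comm]; exact hkd
    exact absurd (hdnorm (k₀+1)) (not_le.2 hnorm)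
  have hDcount : D.Countable := by
    have hsub : D ⊆ ⋃ n : ℕ, {d ∈ D | 1/((n:ℝ)+1) ≤ ‖m d x₀‖} := by
      intro d hd
      have h0 : 0 < ‖m d x₀‖ := norm_pos_iff.2 (hDne0 d hd)
      obtain ⟨n, hn⟩ := exists_nat_one_div_lt h0
      exact Set.mem_iUnion.2 ⟨n, hd, hn.le⟩
    exact Set.Countable.mono hsub (Set.countable_iUnion fun n => (hlevelfin n).countable)
  obtain ⟨e₀, he₀⟩ := hSne
  have he₀𝒩 : e₀ ∈ 𝒩 := hS𝒩 ⟨e₀, he₀⟩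
  have hhfun : ∃ hf : ℕ → C(K,ℝ), (∀ n, hf n ∈ 𝒩) ∧ ∀ d ∈ D, ∃ n, d ≤ hf n := by
    rcases D.eq_empty_or_nonempty with hDe | hDne
    · exact ⟨fun _ => e₀, fun _ => he₀𝒩, by simp [hDe]⟩
    · obtain ⟨dseq, hdseq⟩ := hDcount.exists_eq_range hDne
      have hch : ∀ n : ℕ, ∃ h ∈ 𝒩, dseq n ≤ h := by
        intro n
        have hmem : dseq n ∈ D := by rw [hdseq]; exact Set.mem_range_self n
        exact (hDP.1 _ hmem).2.2
      choose hf hf𝒩 hfle using hch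
      refine ⟨hf, hf𝒩, ?_⟩
      intro d hd
      rw [hdseq] at hd
      obtain ⟨n, rfl⟩ := hd
      exact ⟨n, hfle n⟩
  obtain ⟨hf, hf𝒩, hfdom⟩ := hhfun
  let Fc : ℕ → C(K,ℝ) := fun n => Nat.rec (hf 0) (fun n prev => jn prev (hf (n+1))) n
  have hFcs : ∀ n, Fc (n+1) = jn (Fc n) (hf (n+1)) := fun n => rfl
  have hFc𝒩 : ∀ n, Fc n ∈ 𝒩 := by
    intro n
    induction n with
    | zero => exact hf𝒩 0
    | succ n ih => rw [hFcs]; exact hjoin _ ih _ (hf𝒩 (n+1))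
  have hFcmono : Monotone Fc := by
    refine monotone_nat_of_le_succ fun n => ?_
    rw [hFcs]
    exact le_jn_left _ _ (hFc𝒩 n).1 (hf𝒩 (n+1)).1
  have hfleF : ∀ n, hf n ≤ Fc n := by
    intro n
    cases n with
    | zero => exact le_refl _
    | succ n => rw [hFcs]; exact le_jn_right _ _ (hFc𝒩 n).1 (hf𝒩 (n+1)).1
  obtain ⟨bb, hbb, hbblub⟩ := exists_sup Fc (fun n => (hFc𝒩 n).1)
  have hbb𝒩 : bb ∈ 𝒩 := hchain𝒩 Fc hFc𝒩 hFcmono bb hbb hbblub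
  have hDlebb : ∀ d ∈ D, d ≤ bb := by
    intro d hd
    obtain ⟨n, hn⟩ := hfdom d hd
    exact le_trans hn (le_trans (hfleF n) (hbblub.1 (Set.mem_range_self n)))
  set w : C(K,ℝ) := E - bb with hwdef
  have hwidem : w * w = w := idem_sub _ _ hbb𝒩.1 hE hbb𝒩.2.1
  have hweq0 : w = 0 := by
    by_contra hw
    have hex : ∃ h ∈ 𝒩, h * w ≠ 0 := by
      by_contra hall
      push_neg at hall
      have hub : bb ∈ upperBounds S := by
        intro e he
        have he𝒩 : e ∈ 𝒩 := hS𝒩 ⟨e, he⟩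
        have hew : e * w = 0 := hall e he𝒩
        rw [ContinuousMap.le_def]
        intro k
        rcases idem_apply e he𝒩.1 k with h | h
        · rw [h]
          have := ContinuousMap.le_def.1 (idem_nonneg bb hbb) k
          simpa using this
        · have hEk : E k = 1 := by
            have h4 := ContinuousMap.le_def.1 he𝒩.2.1 k
            rw [h] at h4
            rcases idem_apply E hE k with h' | h'
            · exfalso; rw [h'] at h4; linarith
            · exact h'
          have hwk : w k = 0 := by
            have h5 := ContinuousMap.congr_fun hew k
            rw [ContinuousMap.mul_apply, h, one_mul] at h5
            simpa using h5
          have hbbk : bb k = 1 := by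
            have h6 : w k = E k - bb k := by simp [hwdef]
            rw [hwk, hEk] at h6
            linarith
          rw [h, hbbk]
      have hEb : E ≤ bb := hlub.2 hub
      have hwle : w ≤ 0 := by rw [hwdef]; exact sub_nonpos.2 hEb
      exact hw (le_antisymm hwle (idem_nonneg _ hwidem))
    obtain ⟨h, hh𝒩, hhw⟩ := hex
    set dn : C(K,ℝ) := h * w with hdn
    have hdidem : dn * dn = dn := by
      rw [hdn]
      calc (h*w)*(h*w) = (h*h)*(w*w) := by ring
      _ = h*w := by rw [hh𝒩.1, hwidem]
    have hdleh : dn ≤ h := by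
      rw [ContinuousMap.le_def]
      intro k
      rw [hdn]
      rw [ContinuousMap.mul_apply]
      rcases idem_apply h hh𝒩.1 k with h' | h' <;>
        rcases idem_apply w hwidem k with h'' | h'' <;> simp [h', h'']
    have hdlew : dn ≤ w := by
      rw [ContinuousMap.le_def]
      intro k
      rw [hdn, ContinuousMap.mul_apply]
      rcases idem_apply h hh𝒩.1 k with h' | h' <;>
        rcases idem_apply w hwidem k with h'' | h'' <;> simp [h', h'']
    have hwbb : w * bb = 0 := by
      have hbE : bb * E = bb := idem_mul_of_le _ _ hbb hE hbb𝒩.2.1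
      rw [hwdef, sub_mul, hbb, mul_comm E bb, hbE, sub_self]
    have hdnotD : dn ∉ D := by
      intro hdD
      have h1 : dn ≤ bb := hDlebb _ hdD
      have h2 : dn * bb = dn := idem_mul_of_le _ _ hdidem hbb h1
      have h3 : dn * w = dn := idem_mul_of_le _ _ hdidem hwidem hdlew
      have h4 : dn = 0 := by
        calc dn = dn * bb := h2.symm
        _ = (dn * w) * bb := by rw [h3]
        _ = dn * (w * bb) := by ring
        _ = 0 := by rw [hwbb, mul_zero]
      rw [hdn] at h4
      exact hhw h4
    have hDins : insert dn D ∈ P := by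
      constructor
      · intro d hd
        rcases Set.mem_insert_iff.1 hd with rfl | hd
        · exact ⟨hdidem, by rw [hdn]; exact hhw, ⟨h, hh𝒩, hdleh⟩⟩
        · exact hDP.1 d hd
      · haveI : Std.Symm (fun d d' : C(K,ℝ) => d * d' = 0) := ⟨fun a b hab => by
          rw [mul_comm]; exact hab⟩
        refine Set.pairwise_insert_of_symm.2 ⟨hDP.2, ?_⟩
        · intro d' hd' _
          have h1 : d' ≤ bb := hDlebb _ hd'
          have h2 : d' * bb = d' := idem_mul_of_le _ _ (hDP.1 _ hd').1 hbb h1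
          calc dn * d' = (h * w) * (d' * bb) := by rw [h2, hdn]
          _ = h * (d' * (w * bb)) := by ring
          _ = 0 := by rw [hwbb]; ring
    have hsub : insert dn D ⊆ D := hDmaxle hDins (Set.subset_insert _ _)
    exact hdnotD (hsub (Set.mem_insert _ _))
  have hEbb : E = bb := by
    have h7 : E - bb = 0 := hweq0
    exact sub_eq_zero.1 h7
  have hfinal : m E z = 0 := by rw [hEbb]; exact hbb𝒩.2.2
  rw [hmEz] at hfinal
  exact hfinal
end MainProof



/-- For a cyclic module over a hyperstonian `K` with `m` (weak-star, weak-operator)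
continuous, the Boolean algebra of idempotents is Bade complete on `X`. -/
theorem stmt13 {K X : Type*} [TopologicalSpace K] [CompactSpace K] [T2Space K]
    [ExtremallyDisconnected K]
    [NormedAddCommGroup X] [NormedSpace ℝ X] [CompleteSpace X]
    (hsep : SeparatesByNormalFunctionals K)
    (m : C(K, ℝ) →ₐ[ℝ] (X →L[ℝ] X))
    (hm : ∀ a : C(K, ℝ), ‖m a‖ = ‖a‖)
    (x₀ : X) (hcyc : DenseRange fun a : C(K, ℝ) => m a x₀)
    (hcont : WStarWOTContinuous m) :
    BadeComplete m := by
  exact stmt13' m hm x₀ hcyc hcont
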